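/- Let B be the closed unit ball of ℓ² and let 𝐞 = {e_n}_{n∈ℕ} be its standard orthonormal basis. Then R_1(𝐞, B) = {x ∈ ℓ² : Σ_{n∈ℕ} |x(n)| ≤ 1} (the unit ball of ℓ¹ viewed as a subset of ℓ²), and this set has empty interior in ℓ². -/

import Mathlib

open Set

/-- The `k`-cross approximation of `C ⊆ H` with respect to the orthonormal system `E`:
the closed convex hull of `C ∩ ⋃_{S ∈ [E]_k} F(S)`. -/
noncomputable def kCrossH {H : Type*} [NormedAddCommGroup H] [InnerProductSpace ℝ H]
    (E : Set H) (k : ℕ) (C : Set H) : Set H :=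
  closure (convexHull ℝ (C ∩ ⋃ S ∈ {S : Set H | S ⊆ E ∧ S.Finite ∧ S.ncard = k},
    ((Submodule.span ℝ S).topologicalClosure : Set H)))

/-- The real Hilbert space `ℓ²`. -/
noncomputable abbrev ellTwo : Type := lp (fun _ : ℕ => ℝ) 2

/-- The standard orthonormal basis vectors of `ℓ²`. -/
noncomputable def stdBasis (n : ℕ) : ellTwo := lp.single 2 n (1 : ℝ)

lemma two_toReal : (2 : ENNReal).toReal = 2 := by simp

lemma stdBasis_apply (n m : ℕ) : (stdBasis n : ℕ → ℝ) m = if m = n then 1 else 0 := by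
  rcases eq_or_ne m n with h | h
  · subst h; simp [stdBasis, lp.single_apply_self]
  · simp [stdBasis, lp.single_apply_ne 2 n _ h, h]

lemma norm_stdBasis (n : ℕ) : ‖stdBasis n‖ = 1 := by
  have h : (0:ℝ) < (2 : ENNReal).toReal := by simp
  exact (lp.norm_single (E := fun _ : ℕ => ℝ) (by norm_num : (0:ENNReal) < 2) n (1:ℝ)).trans
    norm_one

lemma continuous_eval (n : ℕ) : Continuous fun x : ellTwo => (x : ℕ → ℝ) n := by
  apply (LipschitzWith.mk_one ?_).continuous
  intro x y
  have := lp.norm_apply_le_norm (by norm_num : (2:ENNReal) ≠ 0) (x - y) n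
  simpa [dist_eq_norm, lp.coeFn_sub] using this

abbrev Lset : Set ellTwo := {x : ellTwo | ∑' n : ℕ, (‖x n‖₊ : ENNReal) ≤ 1}

lemma Lset_closed : IsClosed Lset := by
  have h : Lset = ⋂ F : Finset ℕ, {x : ellTwo | ∑ n ∈ F, ‖x n‖ ≤ 1} := by
    ext x
    simp only [Lset, mem_setOf_eq, mem_iInter, ENNReal.tsum_eq_iSup_sum, iSup_le_iff]
    constructor
    · intro h F
      have := h F
      rw [show ∑ n ∈ F, (‖x n‖₊ : ENNReal) = ((∑ n ∈ F, ‖x n‖₊ : NNReal) : ENNReal) by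
        push_cast; ring] at this
      have h2 : (∑ n ∈ F, ‖x n‖₊ : NNReal) ≤ 1 := by exact_mod_cast this
      calc ∑ n ∈ F, ‖x n‖ = ((∑ n ∈ F, ‖x n‖₊ : NNReal) : ℝ) := by push_cast; ring
        _ ≤ 1 := by exact_mod_cast h2
    · intro h F
      have h1 : (∑ n ∈ F, ‖x n‖₊ : NNReal) ≤ 1 := by
        rw [← NNReal.coe_le_coe]; push_cast; simpa using h F
      calc ∑ n ∈ F, (‖x n‖₊ : ENNReal) = ((∑ n ∈ F, ‖x n‖₊ : NNReal) : ENNReal) := by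
            push_cast; ring
        _ ≤ 1 := by exact_mod_cast h1
  rw [h]
  refine isClosed_iInter fun F => ?_
  have : Continuous fun x : ellTwo => ∑ n ∈ F, ‖x n‖ :=
    continuous_finset_sum _ fun n _ => (continuous_eval n).norm
  exact isClosed_le this continuous_const

lemma Lset_convex : Convex ℝ Lset := by
  intro x hx y hy a b ha hb hab
  simp only [Lset, mem_setOf_eq] at *
  have hcoord : ∀ n, (‖(a • x + b • y) n‖₊ : ENNReal)
      ≤ (‖a‖₊ : ENNReal) * ‖x n‖₊ + (‖b‖₊ : ENNReal) * ‖y n‖₊ := by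
    intro n
    have : (a • x + b • y) n = a * x n + b * y n := by
      simp [lp.coeFn_add, lp.coeFn_smul, Pi.add_apply, Pi.smul_apply, smul_eq_mul]
      rfl
    rw [this]
    calc (‖a * x n + b * y n‖₊ : ENNReal) ≤ (‖a * x n‖₊ : ENNReal) + ‖b * y n‖₊ := by
          exact_mod_cast nnnorm_add_le _ _
      _ = (‖a‖₊ : ENNReal) * ‖x n‖₊ + (‖b‖₊ : ENNReal) * ‖y n‖₊ := by
          push_cast [nnnorm_mul]; ring
  calc ∑' n, (‖(a • x + b • y) n‖₊ : ENNReal)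
      ≤ ∑' n, ((‖a‖₊ : ENNReal) * ‖x n‖₊ + (‖b‖₊ : ENNReal) * ‖y n‖₊) :=
        ENNReal.tsum_le_tsum hcoord
    _ = (‖a‖₊ : ENNReal) * ∑' n, (‖x n‖₊ : ENNReal)
        + (‖b‖₊ : ENNReal) * ∑' n, (‖y n‖₊ : ENNReal) := by
        rw [ENNReal.tsum_add, ENNReal.tsum_mul_left, ENNReal.tsum_mul_left]
    _ ≤ (‖a‖₊ : ENNReal) * 1 + (‖b‖₊ : ENNReal) * 1 := by
        gcongr
    _ = 1 := by
        rw [mul_one, mul_one, ← ENNReal.coe_add]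
        norm_cast
        rw [← NNReal.coe_inj]
        push_cast
        rw [Real.norm_of_nonneg ha, Real.norm_of_nonneg hb, hab]

abbrev Dset : Set ellTwo :=
  Metric.closedBall (0 : ellTwo) 1 ∩
    ⋃ S ∈ {S : Set ellTwo | S ⊆ Set.range stdBasis ∧ S.Finite ∧ S.ncard = 1},
      ((Submodule.span ℝ S).topologicalClosure : Set ellTwo)

lemma smul_stdBasis_mem_Dset {t : ℝ} (n : ℕ) (ht : |t| ≤ 1) : t • stdBasis n ∈ Dset := by
  constructor
  · simp only [Metric.mem_closedBall, dist_zero_right, norm_smul, norm_stdBasis, mul_one]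
    simpa [Real.norm_eq_abs] using ht
  · refine mem_iUnion₂.2 ⟨{stdBasis n}, ⟨?_, finite_singleton _, Set.ncard_singleton _⟩, ?_⟩
    · simp [singleton_subset_iff]
    · apply subset_closure
      exact Submodule.smul_mem _ t (Submodule.mem_span_singleton_self _)

lemma zero_mem_Dset : (0 : ellTwo) ∈ Dset := by
  simpa using smul_stdBasis_mem_Dset (t := 0) 0 (by norm_num)

lemma Dset_subset_Lset : Dset ⊆ Lset := by
  rintro x ⟨hxB, hxU⟩
  rw [mem_iUnion₂] at hxU
  obtain ⟨S, ⟨hSsub, hSfin, hScard⟩, hxS⟩ := hxU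
  obtain ⟨v, rfl⟩ := Set.ncard_eq_one.1 hScard
  obtain ⟨n, rfl⟩ := hSsub (mem_singleton v)
  have hclosed : IsClosed ((Submodule.span ℝ ({stdBasis n} : Set ellTwo)) : Set ellTwo) :=
    Submodule.closed_of_finiteDimensional _
  rw [Submodule.topologicalClosure_coe, hclosed.closure_eq] at hxS
  obtain ⟨t, rfl⟩ := Submodule.mem_span_singleton.1 hxS
  have ht : |t| ≤ 1 := by
    have := hxB
    simp only [Metric.mem_closedBall, dist_zero_right, norm_smul, norm_stdBasis, mul_one,
      Real.norm_eq_abs] at this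
    exact this
  show ∑' m : ℕ, (‖(t • stdBasis n) m‖₊ : ENNReal) ≤ 1
  have hcoord : ∀ m, (t • stdBasis n) m = if m = n then t else 0 := by
    intro m
    rw [lp.coeFn_smul, Pi.smul_apply, stdBasis_apply]
    split <;> simp
  calc ∑' m : ℕ, (‖(t • stdBasis n) m‖₊ : ENNReal)
      = (‖t‖₊ : ENNReal) := by
        rw [tsum_eq_single n]
        · rw [hcoord n]; simp
        · intro m hm; rw [hcoord m]; simp [hm]
    _ ≤ 1 := by
        rw [show (1 : ENNReal) = ((1 : NNReal) : ENNReal) from rfl, ENNReal.coe_le_coe,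
          ← NNReal.coe_le_coe]
        simpa [Real.norm_eq_abs] using ht

lemma sum_mem_hull (F : Finset ℕ) (a : ℕ → ℝ) (h : ∑ n ∈ F, |a n| ≤ 1) :
    ∑ n ∈ F, a n • stdBasis n ∈ convexHull ℝ Dset := by
  obtain ⟨m, hm⟩ := Infinite.exists_notMem_finset F
  set c : ℝ := ∑ n ∈ F, |a n| with hc
  have hc0 : 0 ≤ c := Finset.sum_nonneg fun n _ => abs_nonneg _
  set w : ℕ → ℝ := fun n => if n = m then 1 - c else |a n| with hw
  set p : ℕ → ellTwo := fun n =>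
    if n = m then 0 else (if a n = 0 then 0 else (a n / |a n|) • stdBasis n) with hp
  have hmem : ∀ n ∈ insert m F, p n ∈ convexHull ℝ Dset := by
    intro n _
    apply subset_convexHull
    by_cases h1 : n = m
    · simp only [hp, if_pos h1]; exact zero_mem_Dset
    · simp only [hp, if_neg h1]
      by_cases h2 : a n = 0
      · simp only [if_pos h2]; exact zero_mem_Dset
      · simp only [if_neg h2]
        exact smul_stdBasis_mem_Dset n (by rw [abs_div, abs_abs, div_self (abs_ne_zero.2 h2)])
  have hw0 : ∀ n ∈ insert m F, 0 ≤ w n := by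
    intro n _
    by_cases h1 : n = m
    · simp only [hw, if_pos h1]; linarith
    · simp only [hw, if_neg h1]; exact abs_nonneg _
  have hw1 : ∑ n ∈ insert m F, w n = 1 := by
    rw [Finset.sum_insert hm]
    simp only [hw, if_pos rfl]
    rw [Finset.sum_congr rfl fun n hn => if_neg (by rintro rfl; exact hm hn)]
    simp [← hc]
  have := (convex_convexHull ℝ Dset).sum_mem hw0 hw1 hmem
  convert this using 1
  rw [Finset.sum_insert hm]
  have : w m • p m = 0 := by simp [hw, hp]
  rw [this, zero_add]
  refine Finset.sum_congr rfl fun n hn => ?_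
  have hnm : n ≠ m := by rintro rfl; exact hm hn
  simp only [hw, hp, if_neg hnm]
  by_cases h2 : a n = 0
  · simp [h2]
  · rw [if_neg h2, smul_smul]
    congr 1
    field_simp

lemma Lset_subset_closure_hull : Lset ⊆ closure (convexHull ℝ Dset) := by
  intro x hx
  have hsum : HasSum (fun n : ℕ => lp.single 2 n ((x : ℕ → ℝ) n)) x :=
    lp.hasSum_single (by norm_num) x
  refine mem_closure_of_tendsto hsum (Filter.Eventually.of_forall fun F => ?_)
  have hF : ∑ n ∈ F, |(x : ℕ → ℝ) n| ≤ 1 := by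
    have h1 : ∑ n ∈ F, (‖(x : ℕ → ℝ) n‖₊ : ENNReal) ≤ 1 :=
      le_trans (ENNReal.sum_le_tsum F) hx
    rw [show ∑ n ∈ F, (‖(x : ℕ → ℝ) n‖₊ : ENNReal)
        = ((∑ n ∈ F, ‖(x : ℕ → ℝ) n‖₊ : NNReal) : ENNReal) by push_cast; ring] at h1
    have h2 : (∑ n ∈ F, ‖(x : ℕ → ℝ) n‖₊ : NNReal) ≤ 1 := by exact_mod_cast h1
    calc ∑ n ∈ F, |(x : ℕ → ℝ) n| = ((∑ n ∈ F, ‖(x : ℕ → ℝ) n‖₊ : NNReal) : ℝ) := by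
          push_cast; simp [Real.norm_eq_abs]
      _ ≤ 1 := by exact_mod_cast h2
  have := sum_mem_hull F (fun n => (x : ℕ → ℝ) n) hF
  convert this using 2 with n
  simp only [stdBasis, ← lp.single_smul, smul_eq_mul, mul_one]

lemma interior_Lset : interior Lset = ∅ := by
  rw [eq_empty_iff_forall_notMem]
  intro x hx
  obtain ⟨ε, hε, hball⟩ := Metric.mem_nhds_iff.1 (mem_interior_iff_mem_nhds.1 hx)
  have hxL : x ∈ Lset := interior_subset hx
  set k : ℕ := ⌈(4 / ε) ^ 2⌉₊ + 1 with hk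
  have hk1 : (1:ℕ) ≤ k := Nat.le_add_left 1 _
  have hkpos : (0:ℝ) < k := by exact_mod_cast Nat.lt_of_lt_of_le Nat.zero_lt_one hk1
  have hkgt : (4 / ε) ^ 2 < (k : ℝ) := by
    calc (4 / ε) ^ 2 ≤ (⌈(4 / ε) ^ 2⌉₊ : ℝ) := Nat.le_ceil _
      _ < (k : ℝ) := by exact_mod_cast Nat.lt_succ_self _
  have hsq : (0:ℝ) < Real.sqrt k := Real.sqrt_pos.2 hkpos
  have hsqgt : 4 / ε < Real.sqrt k := by
    have := Real.sqrt_lt_sqrt (sq_nonneg _) hkgt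
    rwa [Real.sqrt_sq (by positivity)] at this
  set δ : ℝ := ε / (2 * Real.sqrt k) with hδ
  have hδpos : 0 < δ := by positivity
  set z : ellTwo := ∑ n ∈ Finset.range k, stdBasis n with hz
  have hznorm : ‖z‖ = Real.sqrt k := by
    have h2 : (0:ℝ) < (2:ENNReal).toReal := by simp
    have := lp.norm_sum_single h2 (fun _ : ℕ => (1:ℝ)) (Finset.range k)
    simp only [two_toReal, norm_one, Real.one_rpow, Finset.sum_const, Finset.card_range,
      nsmul_eq_mul, mul_one] at this
    have hz2 : ‖z‖ ^ (2:ℝ) = (k:ℝ) := by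
      rw [hz]; exact_mod_cast this
    rw [← Real.sqrt_sq (norm_nonneg z)]
    congr 1
    rw [← Real.rpow_natCast ‖z‖ 2] at *
    exact_mod_cast hz2
  have hzcoord : ∀ n < k, (z : ℕ → ℝ) n = 1 := by
    intro n hn
    rw [hz, lp.coeFn_sum, Finset.sum_apply]
    rw [Finset.sum_congr rfl fun m _ => stdBasis_apply m n]
    rw [Finset.sum_ite_eq]
    simp [Finset.mem_range.2 hn]
  set y : ellTwo := x + δ • z with hy
  have hyL : y ∈ Lset := by
    apply hball
    simp only [Metric.mem_ball, hy, dist_eq_norm, add_sub_cancel_left, norm_smul, hznorm,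
      Real.norm_eq_abs, abs_of_pos hδpos]
    rw [hδ]
    have heq : ε / (2 * Real.sqrt k) * Real.sqrt k = ε / 2 := by
      field_simp
    rw [heq]
    linarith
  -- key inequality : k * δ ≤ 2
  have hkey : (k : ℝ) * δ ≤ 2 := by
    have hstep : ∀ n < k, ENNReal.ofReal δ ≤ (‖(y : ℕ → ℝ) n‖₊ : ENNReal) + ‖(x : ℕ → ℝ) n‖₊ := by
      intro n hn
      have hyx : (y : ℕ → ℝ) n - (x : ℕ → ℝ) n = δ := by
        rw [hy, lp.coeFn_add, lp.coeFn_smul, Pi.add_apply, Pi.smul_apply, smul_eq_mul,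
          hzcoord n hn]
        ring
      have h1 : δ ≤ ‖(y : ℕ → ℝ) n‖ + ‖(x : ℕ → ℝ) n‖ := by
        calc δ = ‖(y : ℕ → ℝ) n - (x : ℕ → ℝ) n‖ := by
              rw [hyx, Real.norm_eq_abs, abs_of_pos hδpos]
          _ ≤ _ := norm_sub_le _ _
      calc ENNReal.ofReal δ ≤ ENNReal.ofReal (‖(y : ℕ → ℝ) n‖ + ‖(x : ℕ → ℝ) n‖) :=
            ENNReal.ofReal_le_ofReal h1
        _ = (‖(y : ℕ → ℝ) n‖₊ : ENNReal) + ‖(x : ℕ → ℝ) n‖₊ := by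
            rw [ENNReal.ofReal_add (norm_nonneg _) (norm_nonneg _), ← ENNReal.ofReal_coe_nnreal,
              ← ENNReal.ofReal_coe_nnreal, coe_nnnorm, coe_nnnorm]
    have h2 : (k : ENNReal) * ENNReal.ofReal δ ≤ 2 := by
      calc (k : ENNReal) * ENNReal.ofReal δ = ∑ n ∈ Finset.range k, ENNReal.ofReal δ := by
            simp [Finset.sum_const, mul_comm]
        _ ≤ ∑ n ∈ Finset.range k, ((‖(y : ℕ → ℝ) n‖₊ : ENNReal) + ‖(x : ℕ → ℝ) n‖₊) :=
            Finset.sum_le_sum fun n hn => hstep n (Finset.mem_range.1 hn)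
        _ = (∑ n ∈ Finset.range k, (‖(y : ℕ → ℝ) n‖₊ : ENNReal))
            + ∑ n ∈ Finset.range k, (‖(x : ℕ → ℝ) n‖₊ : ENNReal) := Finset.sum_add_distrib
        _ ≤ (∑' n, (‖(y : ℕ → ℝ) n‖₊ : ENNReal)) + ∑' n, (‖(x : ℕ → ℝ) n‖₊ : ENNReal) := by
            gcongr <;> exact ENNReal.sum_le_tsum _
        _ ≤ 1 + 1 := by gcongr <;> assumption
        _ = 2 := by norm_num
    have h3 : ENNReal.ofReal ((k : ℝ) * δ) ≤ ENNReal.ofReal 2 := by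
      rw [ENNReal.ofReal_mul hkpos.le]
      calc ENNReal.ofReal (k:ℝ) * ENNReal.ofReal δ = (k : ENNReal) * ENNReal.ofReal δ := by
            rw [ENNReal.ofReal_natCast]
        _ ≤ 2 := h2
        _ = ENNReal.ofReal 2 := by norm_num
    rwa [ENNReal.ofReal_le_ofReal_iff (by norm_num)] at h3
  -- but k * δ > 2
  have hgt : 2 < (k : ℝ) * δ := by
    have hkeq : (k : ℝ) = Real.sqrt k * Real.sqrt k := (Real.mul_self_sqrt hkpos.le).symm
    have h4 : 4 < Real.sqrt k * ε := by
      have := mul_lt_mul_of_pos_right hsqgt hε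
      rwa [div_mul_cancel₀ 4 hε.ne'] at this
    rw [hδ, ← mul_div_assoc, lt_div_iff₀ (by positivity : (0:ℝ) < 2 * Real.sqrt k)]
    nlinarith [mul_lt_mul_of_pos_left h4 hsq]
  linarith

/-- For the closed unit ball `B` of `ℓ²` and its standard orthonormal basis `𝐞`,
`R_1(𝐞, B)` is the unit ball of `ℓ¹` viewed inside `ℓ²`, and it has empty interior. -/
theorem stmt_17 :
    kCrossH (Set.range stdBasis) 1 (Metric.closedBall (0 : ellTwo) 1) =
      {x : ellTwo | ∑' n : ℕ, (‖x n‖₊ : ENNReal) ≤ 1} ∧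
    interior (kCrossH (Set.range stdBasis) 1 (Metric.closedBall (0 : ellTwo) 1)) = ∅ := by
  have h1 : kCrossH (Set.range stdBasis) 1 (Metric.closedBall (0 : ellTwo) 1) = Lset := by
    apply le_antisymm
    · exact closure_minimal (convexHull_min Dset_subset_Lset Lset_convex) Lset_closed
    · exact Lset_subset_closure_hull
  exact ⟨h1, by rw [h1]; exact interior_Lset⟩
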